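/- Let n_t, n_r be positive integers, H ∈ ℝ^{n_r × n_t}, and μ any probability measure on ℝ^{n_t}. Define f_μ(y) = (2π)^{-n_r/2} ∫ exp(-‖y - Hx‖²/2) dμ(x) for y ∈ ℝ^{n_r}. Then ∫_{ℝ^{n_r}} f_μ(y)² dy = 2^{-n_r} π^{-n_r/2} · ∫∫ exp( -‖H(x - x')‖²/4 ) dμ(x) dμ(x'). -/

import Mathlib

open MeasureTheory Real

lemma gauss_integrable (n : ℕ) :
    Integrable (fun v : EuclideanSpace ℝ (Fin n) ↦ rexp (-‖v‖ ^ 2)) := by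
  have h := (GaussianFourier.integrable_cexp_neg_mul_sq_norm_add
    (V := EuclideanSpace ℝ (Fin n)) (b := (1 : ℂ)) (by norm_num) 0 0).norm
  simpa [Complex.norm_exp, ← Complex.ofReal_pow] using h

lemma gauss_int (n : ℕ) :
    ∫ v : EuclideanSpace ℝ (Fin n), rexp (-‖v‖ ^ 2) = π ^ ((n : ℝ) / 2) := by
  have h := GaussianFourier.integral_rexp_neg_mul_sq_norm
    (V := EuclideanSpace ℝ (Fin n)) (b := (1 : ℝ)) one_pos
  simpa using h

lemma key_eq (n : ℕ) (a b : EuclideanSpace ℝ (Fin n)) (y : EuclideanSpace ℝ (Fin n)) :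
    rexp (-‖y - a‖ ^ 2 / 2) * rexp (-‖y - b‖ ^ 2 / 2) =
      rexp (-‖a - b‖ ^ 2 / 4) * rexp (-‖y - (2 : ℝ)⁻¹ • (a + b)‖ ^ 2) := by
  rw [← Real.exp_add, ← Real.exp_add]
  congr 1
  have hp := parallelogram_law_with_norm ℝ (y - a) (y - b)
  have h1 : (y - a) + (y - b) = (2 : ℝ) • (y - (2 : ℝ)⁻¹ • (a + b)) := by
    rw [smul_sub, smul_smul]
    norm_num
    module
  have h2 : (y - a) - (y - b) = b - a := by abel
  rw [h1, h2, norm_smul] at hp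
  simp only [Real.norm_ofNat] at hp
  rw [norm_sub_rev b a] at hp
  nlinarith [hp]

lemma int_key (n : ℕ) (a b : EuclideanSpace ℝ (Fin n)) :
    ∫ y : EuclideanSpace ℝ (Fin n), rexp (-‖y - a‖ ^ 2 / 2) * rexp (-‖y - b‖ ^ 2 / 2) =
      π ^ ((n : ℝ) / 2) * rexp (-‖a - b‖ ^ 2 / 4) := by
  simp_rw [key_eq n a b]
  rw [integral_const_mul, integral_sub_right_eq_self
    (fun y : EuclideanSpace ℝ (Fin n) ↦ rexp (-‖y‖ ^ 2)) ((2 : ℝ)⁻¹ • (a + b)), gauss_int]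
  ring

lemma integ_key (n : ℕ) (a b : EuclideanSpace ℝ (Fin n)) :
    Integrable (fun y : EuclideanSpace ℝ (Fin n) ↦
      rexp (-‖y - a‖ ^ 2 / 2) * rexp (-‖y - b‖ ^ 2 / 2)) := by
  simp_rw [key_eq n a b]
  exact ((gauss_integrable n).comp_sub_right ((2 : ℝ)⁻¹ • (a + b))).const_mul _

theorem stmt8 (nt nr : ℕ) (hnt : 0 < nt) (hnr : 0 < nr)
    (H : Matrix (Fin nr) (Fin nt) ℝ)
    (μ : Measure (EuclideanSpace ℝ (Fin nt))) (hμ : IsProbabilityMeasure μ) :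
    ∫ y : EuclideanSpace ℝ (Fin nr),
        ((2 * π) ^ (-(nr : ℝ) / 2) *
          ∫ x, Real.exp (-‖y - (Matrix.toEuclideanLin H) x‖ ^ 2 / 2) ∂μ) ^ 2 =
      2 ^ (-(nr : ℝ)) * π ^ (-(nr : ℝ) / 2) *
        ∫ xx' : EuclideanSpace ℝ (Fin nt) × EuclideanSpace ℝ (Fin nt),
          Real.exp (-‖(Matrix.toEuclideanLin H) (xx'.1 - xx'.2)‖ ^ 2 / 4) ∂(μ.prod μ) := by
  set T : EuclideanSpace ℝ (Fin nt) →ₗ[ℝ] EuclideanSpace ℝ (Fin nr) :=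
    Matrix.toEuclideanLin H with hT
  have hTc : Continuous T := T.continuous_of_finiteDimensional
  set G : EuclideanSpace ℝ (Fin nr) →
      EuclideanSpace ℝ (Fin nt) × EuclideanSpace ℝ (Fin nt) → ℝ :=
    fun y p ↦ rexp (-‖y - T p.1‖ ^ 2 / 2) * rexp (-‖y - T p.2‖ ^ 2 / 2) with hG
  have step1 : ∀ y : EuclideanSpace ℝ (Fin nr),
      ((2 * π) ^ (-(nr : ℝ) / 2) * ∫ x, rexp (-‖y - T x‖ ^ 2 / 2) ∂μ) ^ 2
      = (2 * π) ^ (-(nr : ℝ)) * ∫ p, G y p ∂(μ.prod μ) := by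
    intro y
    have he : (-(nr : ℝ) / 2) * ((2 : ℕ) : ℝ) = -(nr : ℝ) := by push_cast; ring
    rw [mul_pow, ← Real.rpow_natCast ((2 * π) ^ (-(nr : ℝ) / 2)) 2,
      ← Real.rpow_mul (by positivity), he, sq,
      ← integral_prod_mul (μ := μ) (ν := μ) (fun x ↦ rexp (-‖y - T x‖ ^ 2 / 2))
        (fun x ↦ rexp (-‖y - T x‖ ^ 2 / 2))]
  have hInt : Integrable (Function.uncurry G) (volume.prod (μ.prod μ)) := by
    constructor
    · apply Continuous.aestronglyMeasurable
      apply Continuous.mul <;>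
        exact Real.continuous_exp.comp (by fun_prop)
    · rw [hasFiniteIntegral_def]
      rw [lintegral_prod_symm _ (by fun_prop : Measurable
          fun q : EuclideanSpace ℝ (Fin nr) ×
            (EuclideanSpace ℝ (Fin nt) × EuclideanSpace ℝ (Fin nt)) ↦
              ‖Function.uncurry G q‖ₑ).aemeasurable]
      have hb : ∀ p : EuclideanSpace ℝ (Fin nt) × EuclideanSpace ℝ (Fin nt),
          ∫⁻ y, ‖Function.uncurry G (y, p)‖ₑ ≤
            ENNReal.ofReal (π ^ ((nr : ℝ) / 2)) := by
        intro p
        have h1 : ∫⁻ y, ‖Function.uncurry G (y, p)‖ₑ =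
            ENNReal.ofReal (∫ y, G y p) := by
          simp only [hG, Function.uncurry_apply_pair]
          rw [ofReal_integral_eq_lintegral_ofReal (integ_key nr (T p.1) (T p.2))
            (ae_of_all _ fun y ↦ mul_nonneg (Real.exp_nonneg _) (Real.exp_nonneg _))]
          exact lintegral_congr fun y ↦ Real.enorm_eq_ofReal
            (mul_nonneg (Real.exp_nonneg _) (Real.exp_nonneg _))
        rw [h1, hG]
        simp only []
        rw [int_key]
        refine ENNReal.ofReal_le_ofReal ?_
        have := Real.exp_le_one_iff.2 (by nlinarith [sq_nonneg ‖T p.1 - T p.2‖] : -‖T p.1 - T p.2‖ ^ 2 / 4 ≤ 0)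
        nlinarith [Real.rpow_nonneg Real.pi_pos.le ((nr : ℝ) / 2),
          Real.exp_pos (-‖T p.1 - T p.2‖ ^ 2 / 4)]
      calc ∫⁻ p, ∫⁻ y, ‖Function.uncurry G (y, p)‖ₑ ∂volume ∂(μ.prod μ)
          ≤ ∫⁻ _, ENNReal.ofReal (π ^ ((nr : ℝ) / 2)) ∂(μ.prod μ) :=
            lintegral_mono hb
        _ < ⊤ := by
            rw [lintegral_const]
            exact ENNReal.mul_lt_top ENNReal.ofReal_lt_top (measure_lt_top _ _)
  simp_rw [step1]
  rw [integral_const_mul, integral_integral_swap hInt]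
  have step2 : ∀ p : EuclideanSpace ℝ (Fin nt) × EuclideanSpace ℝ (Fin nt),
      ∫ y, G y p = π ^ ((nr : ℝ) / 2) * rexp (-‖T (p.1 - p.2)‖ ^ 2 / 4) := by
    intro p
    rw [hG]
    simp only []
    rw [int_key, map_sub]
  simp_rw [step2]
  rw [integral_const_mul, ← mul_assoc]
  congr 1
  rw [Real.mul_rpow (by norm_num) Real.pi_pos.le,
    mul_assoc, ← Real.rpow_add Real.pi_pos,
    show (-(nr : ℝ) + (nr : ℝ) / 2) = -(nr : ℝ) / 2 from by ring]
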